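/- Let n ≥ 1 and let K : (0,∞) × ℝⁿ × ℝⁿ → ℝ be the Mehler kernel K(t,x,y) = π^{−n/2}(1 − e^{−2t})^{−n/2} · exp( −[ ((|x|² + |y|²)/2)(1 + e^{−2t}) − 2 e^{−t} x·y ] / (1 − e^{−2t}) ). Then for every bounded continuous function f : ℝⁿ → ℝ and every x ∈ ℝⁿ, ∫_{ℝⁿ} K(t,x,y) f(y) dy converges to f(x) as t → 0⁺. -/

import Mathlib

open Real MeasureTheory Filter

/-- The Mehler kernel of the harmonic oscillator
`L = (1/2) ∑ i (-∂²/∂xᵢ² + xᵢ² - 1)` on `ℝⁿ`. -/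
noncomputable def mehlerKernel (n : ℕ) (t : ℝ) (x y : Fin n → ℝ) : ℝ :=
  Real.pi ^ (-(n : ℝ) / 2) * (1 - Real.exp (-(2 * t))) ^ (-(n : ℝ) / 2) *
    Real.exp (-((((∑ i, x i ^ 2) + ∑ i, y i ^ 2) / 2) * (1 + Real.exp (-(2 * t)))
        - 2 * Real.exp (-t) * ∑ i, x i * y i) / (1 - Real.exp (-(2 * t))))

/-- The Gaussian integral over `ℝⁿ`. -/
lemma mehler_gaussian_pi_integral (n : ℕ) :
    ∫ z : Fin n → ℝ, Real.exp (-∑ i, z i ^ 2) = Real.pi ^ ((n : ℝ) / 2) := by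
  have h : ∀ z : Fin n → ℝ, Real.exp (-∑ i, z i ^ 2) = ∏ i, Real.exp (-(z i ^ 2)) := by
    intro z
    rw [← Real.exp_sum, ← Finset.sum_neg_distrib]
  simp_rw [h]
  have hpow := MeasureTheory.integral_fintype_prod_eq_pow (ι := Fin n) (fun x : ℝ => Real.exp (-(x ^ 2)))
    (μ := volume)
  rw [← MeasureTheory.volume_pi] at hpow
  rw [hpow]
  have h1 : (∫ x : ℝ, Real.exp (-(x ^ 2))) = Real.sqrt Real.pi := by
    simpa using integral_gaussian 1
  rw [h1, Fintype.card_fin, Real.sqrt_eq_rpow, ← Real.rpow_natCast (Real.pi ^ (1/2 : ℝ)) n,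
    ← Real.rpow_mul pi_nonneg]
  rw [show (1/2 * (n:ℝ)) = (n:ℝ)/2 by ring]

/-- Gaussians are integrable on `ℝⁿ`. -/
lemma mehler_integrable_gaussian_pi (n : ℕ) {b : ℝ} (hb : 0 < b) :
    Integrable (fun z : Fin n → ℝ => Real.exp (-b * ∑ i, z i ^ 2)) := by
  have h : ∀ z : Fin n → ℝ, Real.exp (-b * ∑ i, z i ^ 2) = ∏ i, Real.exp (-b * z i ^ 2) := by
    intro z
    rw [← Real.exp_sum, Finset.mul_sum]
  simp_rw [h]
  exact Integrable.fintype_prod (f := fun _ : Fin n => fun x : ℝ => Real.exp (-b * x ^ 2))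
    (fun i => integrable_exp_neg_mul_sq hb)

/-- Change of variables `y = e^{-t} x + √(1 - e^{-2t}) z` in the Mehler integral. -/
lemma mehler_subst (n : ℕ) (x : Fin n → ℝ) {t : ℝ} (ht : 0 < t) (f : (Fin n → ℝ) → ℝ) :
    ∫ y : Fin n → ℝ, mehlerKernel n t x y * f y
      = ∫ z : Fin n → ℝ, Real.pi ^ (-(n : ℝ) / 2) * Real.exp (-∑ i, z i ^ 2)
          * Real.exp (((∑ i, (Real.exp (-t) * x i + Real.sqrt (1 - Real.exp (-(2 * t))) * z i) ^ 2)
              - ∑ i, x i ^ 2) / 2)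
          * f (fun i => Real.exp (-t) * x i + Real.sqrt (1 - Real.exp (-(2 * t))) * z i) := by
  set s : ℝ := Real.exp (-t) with hs
  set r : ℝ := Real.sqrt (1 - Real.exp (-(2 * t))) with hrdef
  have hs2 : Real.exp (-(2 * t)) = s ^ 2 := by
    rw [hs, show -(2 * t) = -t + -t by ring, Real.exp_add]; ring
  have h1 : (0 : ℝ) < 1 - s ^ 2 := by
    have : s ^ 2 < 1 := by
      rw [← hs2]
      exact Real.exp_lt_one_iff.mpr (by linarith)
    linarith
  have hr2 : r ^ 2 = 1 - s ^ 2 := by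
    rw [hrdef, Real.sq_sqrt (by rw [hs2]; exact h1.le)]
    rw [hs2]
  have hr : 0 < r := by
    rw [hrdef]
    exact Real.sqrt_pos.2 (by rw [hs2]; exact h1)
  set F : (Fin n → ℝ) → ℝ := fun y => mehlerKernel n t x y * f y with hF
  have hsm : ∀ z : Fin n → ℝ, (s • x + r • z) = fun i => s * x i + r * z i := fun z => rfl
  have step1 : ∫ z : Fin n → ℝ, F (s • x + r • z) = |((r ^ n) ⁻¹)| • ∫ y, F y := by
    have h := Measure.integral_comp_smul (volume : Measure (Fin n → ℝ))
      (fun w => F (s • x + w)) r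
    rw [integral_add_left_eq_self (μ := (volume : Measure (Fin n → ℝ)))
      (fun w => F w) (s • x)] at h
    simpa [Module.finrank_fintype_fun_eq_card] using h
  have habs : |((r ^ n)⁻¹)| = (r ^ n)⁻¹ := abs_of_pos (by positivity)
  have step2 : ∫ y, F y = r ^ n * ∫ z : Fin n → ℝ, F (s • x + r • z) := by
    rw [step1, habs, smul_eq_mul, ← mul_assoc, mul_inv_cancel₀ (by positivity), one_mul]
  rw [step2, ← integral_const_mul]
  congr 1
  funext z
  rw [hsm z]
  set y : Fin n → ℝ := fun i => s * x i + r * z i with hy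
  set A := ∑ i, x i ^ 2
  set B := ∑ i, x i * z i
  set C := ∑ i, z i ^ 2
  set Y := ∑ i, y i ^ 2 with hYdef
  have hY : Y = s ^ 2 * A + 2 * s * r * B + r ^ 2 * C := by
    show (∑ i, y i ^ 2)
        = s ^ 2 * (∑ i, x i ^ 2) + 2 * s * r * (∑ i, x i * z i) + r ^ 2 * (∑ i, z i ^ 2)
    simp only [Finset.mul_sum, ← Finset.sum_add_distrib]
    exact Finset.sum_congr rfl fun i _ => by rw [hy]; ring
  have hXY : (∑ i, x i * y i) = s * A + r * B := by
    show (∑ i, x i * y i) = s * (∑ i, x i ^ 2) + r * (∑ i, x i * z i)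
    simp only [Finset.mul_sum, ← Finset.sum_add_distrib]
    exact Finset.sum_congr rfl fun i _ => by rw [hy]; ring
  have hnorm : r ^ n * (1 - Real.exp (-(2 * t))) ^ (-(n : ℝ) / 2) = 1 := by
    have e1 : (1 - Real.exp (-(2 * t))) = r ^ 2 := by rw [hs2, hr2]
    rw [e1, show (r ^ 2 : ℝ) = r ^ ((2 : ℕ) : ℝ) from (Real.rpow_natCast r 2).symm,
      ← Real.rpow_mul hr.le, show ((2 : ℕ) : ℝ) * (-(n : ℝ) / 2) = -(n : ℝ) by push_cast; ring,
      Real.rpow_neg hr.le, Real.rpow_natCast]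
    exact mul_inv_cancel₀ (by positivity)
  have hexp : -(((A + Y) / 2) * (1 + Real.exp (-(2 * t))) - 2 * s * ∑ i, x i * y i)
      / (1 - Real.exp (-(2 * t))) = -C + (Y - A) / 2 := by
    rw [hs2, hXY, div_eq_iff (by linarith : (1 : ℝ) - s ^ 2 ≠ 0), hY]
    linear_combination (-C) * hr2
  show r ^ n * (mehlerKernel n t x y * f y) = _
  rw [mehlerKernel]
  have : (∑ i, x i ^ 2) = A := rfl
  rw [this]
  rw [show (∑ i, y i ^ 2) = Y from rfl, hexp]
  rw [Real.exp_add]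
  linear_combination (Real.pi ^ (-(n : ℝ) / 2) * Real.exp (-C) * Real.exp ((Y - A) / 2) * f y)
    * hnorm

theorem mehlerKernel_tendsto_id (n : ℕ) (hn : 1 ≤ n)
    (f : (Fin n → ℝ) → ℝ) (hf : Continuous f) (M : ℝ) (hM : ∀ y, |f y| ≤ M)
    (x : Fin n → ℝ) :
    Tendsto (fun t => ∫ y : Fin n → ℝ, mehlerKernel n t x y * f y)
      (nhdsWithin 0 (Set.Ioi 0)) (nhds (f x)) := by
  have hM0 : 0 ≤ M := (abs_nonneg _).trans (hM 0)
  set c : ℝ := Real.pi ^ (-(n : ℝ) / 2) with hc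
  have hc0 : 0 < c := Real.rpow_pos_of_pos pi_pos _
  set G : ℝ → (Fin n → ℝ) → ℝ := fun t z =>
    c * Real.exp (-∑ i, z i ^ 2)
      * Real.exp (((∑ i, (Real.exp (-t) * x i
          + Real.sqrt (1 - Real.exp (-(2 * t))) * z i) ^ 2) - ∑ i, x i ^ 2) / 2)
      * f (fun i => Real.exp (-t) * x i + Real.sqrt (1 - Real.exp (-(2 * t))) * z i)
    with hG
  have hkey : Tendsto (fun t => ∫ z, G t z) (nhdsWithin 0 (Set.Ioi 0))
      (nhds (∫ z : Fin n → ℝ, c * Real.exp (-∑ i, z i ^ 2) * f x)) := by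
    apply tendsto_integral_filter_of_dominated_convergence
      (bound := fun z => (c * (M * Real.exp ((∑ i, x i ^ 2) / 2)))
        * Real.exp (-(1/2) * ∑ i, z i ^ 2))
    · -- measurability
      apply Eventually.of_forall
      intro t
      apply Continuous.aestronglyMeasurable
      have h1 : Continuous fun z : Fin n → ℝ => (fun i => Real.exp (-t) * x i
          + Real.sqrt (1 - Real.exp (-(2 * t))) * z i : Fin n → ℝ) :=
        continuous_pi fun i => continuous_const.add (continuous_const.mul (continuous_apply i))
      have h2 : Continuous fun z : Fin n → ℝ => ∑ i, z i ^ 2 :=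
        continuous_finset_sum _ fun i _ => (continuous_apply i).pow 2
      exact ((continuous_const.mul (Real.continuous_exp.comp h2.neg)).mul
        (Real.continuous_exp.comp (((h2.comp h1).sub continuous_const).div_const 2))).mul
        (hf.comp h1)
    · -- domination
      have hev : ∀ᶠ t : ℝ in nhdsWithin 0 (Set.Ioi 0), 1/2 < Real.exp (-(2 * t)) := by
        have hco : Continuous fun t : ℝ => Real.exp (-(2 * t)) :=
          Real.continuous_exp.comp (continuous_const.mul continuous_id).neg
        have h0 : Tendsto (fun t : ℝ => Real.exp (-(2 * t))) (nhdsWithin 0 (Set.Ioi 0))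
            (nhds 1) := by
          have := (hco.tendsto 0).mono_left (nhdsWithin_le_nhds (s := Set.Ioi (0:ℝ)))
          simpa using this
        exact h0.eventually (eventually_gt_nhds (by norm_num))
      filter_upwards [hev, self_mem_nhdsWithin] with t hhalf (ht : 0 < t)
      apply Eventually.of_forall
      intro z
      set s : ℝ := Real.exp (-t) with hs
      set r : ℝ := Real.sqrt (1 - Real.exp (-(2 * t))) with hrdef
      have hs0 : 0 < s := Real.exp_pos _
      have hs1 : s ≤ 1 := Real.exp_le_one_iff.mpr (by linarith)
      have hr0 : 0 ≤ r := Real.sqrt_nonneg _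
      have hexp1 : Real.exp (-(2 * t)) ≤ 1 := Real.exp_le_one_iff.mpr (by linarith)
      have hr2 : r ^ 2 ≤ 1/2 := by
        rw [hrdef, Real.sq_sqrt (by linarith)]
        linarith
      have hYle : (∑ i, (s * x i + r * z i) ^ 2) ≤ 2 * (∑ i, x i ^ 2) + ∑ i, z i ^ 2 := by
        have : (∑ i, (s * x i + r * z i) ^ 2) ≤ ∑ i, (2 * x i ^ 2 + z i ^ 2) := by
          apply Finset.sum_le_sum
          intro i _
          nlinarith [sq_nonneg (s * x i - r * z i),
            mul_nonneg (by nlinarith : (0:ℝ) ≤ 1 - s ^ 2) (sq_nonneg (x i)),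
            mul_nonneg (by linarith : (0:ℝ) ≤ 1 - 2 * r ^ 2) (sq_nonneg (z i))]
        simpa [Finset.sum_add_distrib, Finset.mul_sum] using this
      have hfy := hM (fun i => s * x i + r * z i)
      rw [hG]
      simp only [Real.norm_eq_abs, abs_mul, abs_of_pos hc0, abs_of_pos (Real.exp_pos _)]
      calc c * Real.exp (-∑ i, z i ^ 2)
            * Real.exp (((∑ i, (s * x i + r * z i) ^ 2) - ∑ i, x i ^ 2) / 2)
            * |f fun i => s * x i + r * z i|
          ≤ c * Real.exp (-∑ i, z i ^ 2)
            * Real.exp (((∑ i, (s * x i + r * z i) ^ 2) - ∑ i, x i ^ 2) / 2) * M := by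
            gcongr
        _ = c * M * Real.exp (-∑ i, z i ^ 2
              + ((∑ i, (s * x i + r * z i) ^ 2) - ∑ i, x i ^ 2) / 2) := by
            rw [Real.exp_add]; ring
        _ ≤ c * M * Real.exp ((∑ i, x i ^ 2) / 2 + -(1/2) * ∑ i, z i ^ 2) := by
            refine mul_le_mul_of_nonneg_left (Real.exp_le_exp.mpr (by linarith)) (by positivity)
        _ = c * (M * Real.exp ((∑ i, x i ^ 2) / 2)) * Real.exp (-(1/2) * ∑ i, z i ^ 2) := by
            rw [Real.exp_add]; ring
    · -- integrability of the bound
      exact (mehler_integrable_gaussian_pi n (by norm_num : (0:ℝ) < 1/2)).const_mul _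
    · -- pointwise limit
      apply Eventually.of_forall
      intro z
      have hcont : Continuous fun t : ℝ => G t z := by
        have hsc : Continuous fun t : ℝ => Real.exp (-t) := by fun_prop
        have hrc : Continuous fun t : ℝ => Real.sqrt (1 - Real.exp (-(2 * t))) := by fun_prop
        have h1 : Continuous fun t : ℝ => (fun i => Real.exp (-t) * x i
            + Real.sqrt (1 - Real.exp (-(2 * t))) * z i : Fin n → ℝ) :=
          continuous_pi fun i => (hsc.mul continuous_const).add (hrc.mul continuous_const)
        have h2 : Continuous fun y : Fin n → ℝ => ∑ i, y i ^ 2 :=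
          continuous_finset_sum _ fun i _ => (continuous_apply i).pow 2
        exact (continuous_const.mul
          (Real.continuous_exp.comp (((h2.comp h1).sub continuous_const).div_const 2))).mul
          (hf.comp h1)
      have h0 : G 0 z = c * Real.exp (-∑ i, z i ^ 2) * f x := by
        rw [hG]
        norm_num
      have := (hcont.tendsto 0).mono_left (nhdsWithin_le_nhds (s := Set.Ioi (0:ℝ)))
      rwa [h0] at this
  have hval : (∫ z : Fin n → ℝ, c * Real.exp (-∑ i, z i ^ 2) * f x) = f x := by
    rw [MeasureTheory.integral_mul_const, MeasureTheory.integral_const_mul,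
      mehler_gaussian_pi_integral, hc, ← Real.rpow_add pi_pos,
      show -(n:ℝ)/2 + (n:ℝ)/2 = 0 by ring, Real.rpow_zero, one_mul]
  rw [hval] at hkey
  refine Tendsto.congr' ?_ hkey
  filter_upwards [self_mem_nhdsWithin] with t (ht : 0 < t)
  exact (mehler_subst n x ht f).symm
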